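/- Let n ≥ 1 be an integer and K > 0, d > 0 real numbers. Then for every r with 0 < r ≤ d, the following inequality holds: r^n · (∫₀^d sinh^{n-1}(√K t) dt) / (∫₀^r sinh^{n-1}(√K t) dt) ≤ d^n · e^{(n-1)√K·d}. -/

import Mathlib

open Real intervalIntegral

lemma sinh_le_self_mul_exp {y : ℝ} (hy : 0 ≤ y) : Real.sinh y ≤ y * Real.exp y := by
  have h1 : (-(2*y)) + 1 ≤ Real.exp (-(2*y)) := Real.add_one_le_exp _
  have h2 : Real.exp (-(2*y)) = Real.exp (-y) / Real.exp y := by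
    rw [Real.exp_neg, Real.exp_neg]
    field_simp [Real.exp_ne_zero]
    rw [sq, ← Real.exp_add]; ring_nf
  have hpos : 0 < Real.exp y := Real.exp_pos y
  rw [Real.sinh_eq]
  rw [h2, le_div_iff₀ hpos] at h1
  nlinarith [Real.exp_pos (-y), Real.exp_pos y]

lemma sinh_scale {lam x M : ℝ} (hlam : 1 ≤ lam) (hx : 0 ≤ x) (hM : lam * x ≤ M) :
    Real.sinh (lam * x) ≤ lam * Real.exp M * Real.sinh x := by
  have h1 : Real.sinh (lam * x) ≤ (lam * x) * Real.exp (lam * x) :=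
    sinh_le_self_mul_exp (by positivity)
  have h2 : x ≤ Real.sinh x := Real.self_le_sinh_iff.2 hx
  have h3 : Real.exp (lam * x) ≤ Real.exp M := Real.exp_le_exp.2 hM
  have hlx : 0 ≤ lam * x := mul_nonneg (le_trans zero_le_one hlam) hx
  calc Real.sinh (lam * x) ≤ (lam * x) * Real.exp (lam * x) := h1
    _ ≤ (lam * x) * Real.exp M := mul_le_mul_of_nonneg_left h3 hlx
    _ ≤ (lam * Real.sinh x) * Real.exp M := by
        have : lam * x ≤ lam * Real.sinh x :=
          mul_le_mul_of_nonneg_left h2 (le_trans zero_le_one hlam)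
        exact mul_le_mul_of_nonneg_right this (Real.exp_pos M).le
    _ = lam * Real.exp M * Real.sinh x := by ring

/-- Let `n ≥ 1` be an integer and `K > 0`, `d > 0`. Then for every `r` with `0 < r ≤ d`,
`r^n · (∫₀^d sinh^{n-1}(√K t) dt) / (∫₀^r sinh^{n-1}(√K t) dt) ≤ d^n · e^{(n-1)√K d}`. -/
theorem integral_sinh_ratio_bound (n : ℕ) (hn : 1 ≤ n) (K d : ℝ) (hK : 0 < K) (hd : 0 < d)
    (r : ℝ) (hr : 0 < r) (hrd : r ≤ d) :
    r ^ n * (∫ t in (0 : ℝ)..d, Real.sinh (Real.sqrt K * t) ^ (n - 1)) /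
        (∫ t in (0 : ℝ)..r, Real.sinh (Real.sqrt K * t) ^ (n - 1)) ≤
      d ^ n * Real.exp (((n : ℝ) - 1) * Real.sqrt K * d) := by
  have hsK : 0 < Real.sqrt K := Real.sqrt_pos.2 hK
  set f : ℝ → ℝ := fun t => Real.sinh (Real.sqrt K * t) ^ (n - 1) with hf
  have hcont : Continuous f := by fun_prop
  set Ir := ∫ t in (0:ℝ)..r, f t with hIr
  set Id := ∫ t in (0:ℝ)..d, f t with hId
  have hIrpos : 0 < Ir := by
    apply intervalIntegral.intervalIntegral_pos_of_pos_on
      (hcont.intervalIntegrable 0 r)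
    · intro x hx
      have : 0 < Real.sinh (Real.sqrt K * x) := Real.sinh_pos_iff.2 (mul_pos hsK hx.1)
      positivity
    · exact hr
  set lam := d / r with hlam
  have hlam1 : 1 ≤ lam := (one_le_div hr).2 hrd
  have hlampos : 0 < lam := lt_of_lt_of_le one_pos hlam1
  -- change of variables
  have hlr : lam * r = d := div_mul_cancel₀ d hr.ne'
  have hcov : Id = lam * ∫ s in (0:ℝ)..r, f (lam * s) := by
    rw [intervalIntegral.integral_comp_mul_left f (ne_of_gt hlampos), mul_zero,
      smul_eq_mul, ← mul_assoc, mul_inv_cancel₀ (ne_of_gt hlampos), one_mul,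
      hlr, hId]
  -- pointwise bound on [0, r]
  have hpt : ∀ s ∈ Set.Icc (0:ℝ) r,
      f (lam * s) ≤ (lam * Real.exp (Real.sqrt K * d)) ^ (n - 1) * f s := by
    intro s hs
    have hx : 0 ≤ Real.sqrt K * s := mul_nonneg hsK.le hs.1
    have hM : lam * (Real.sqrt K * s) ≤ Real.sqrt K * d := by
      have : lam * s ≤ d := by
        rw [hlam, div_mul_eq_mul_div, div_le_iff₀ hr]
        exact mul_le_mul_of_nonneg_left hs.2 hd.le
      calc lam * (Real.sqrt K * s) = Real.sqrt K * (lam * s) := by ring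
        _ ≤ Real.sqrt K * d := by nlinarith
    have key : Real.sinh (lam * (Real.sqrt K * s)) ≤
        lam * Real.exp (Real.sqrt K * d) * Real.sinh (Real.sqrt K * s) :=
      sinh_scale hlam1 hx hM
    have h0 : 0 ≤ Real.sinh (lam * (Real.sqrt K * s)) :=
      Real.sinh_nonneg_iff.2 (by positivity)
    calc f (lam * s) = Real.sinh (lam * (Real.sqrt K * s)) ^ (n-1) := by
          rw [hf]; ring_nf
      _ ≤ (lam * Real.exp (Real.sqrt K * d) * Real.sinh (Real.sqrt K * s)) ^ (n-1) :=
          pow_le_pow_left₀ h0 key _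
      _ = (lam * Real.exp (Real.sqrt K * d)) ^ (n-1) * f s := by rw [mul_pow, hf]
  -- integral comparison
  have hint : (∫ s in (0:ℝ)..r, f (lam * s)) ≤
      (lam * Real.exp (Real.sqrt K * d)) ^ (n - 1) * Ir := by
    rw [hIr, ← intervalIntegral.integral_const_mul]
    apply intervalIntegral.integral_mono_on hr.le
    · exact (hcont.comp (continuous_const.mul continuous_id)).intervalIntegrable 0 r
    · exact (continuous_const.mul hcont).intervalIntegrable 0 r
    · exact hpt
  have hexp : Real.exp (Real.sqrt K * d) ^ (n-1) =
      Real.exp (((n:ℝ) - 1) * Real.sqrt K * d) := by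
    rw [← Real.exp_nat_mul]
    congr 1
    have : ((n - 1 : ℕ) : ℝ) = (n:ℝ) - 1 := by
      have := Nat.cast_sub hn (R := ℝ); simpa using this
    rw [this]; ring
  have hnn : n - 1 + 1 = n := Nat.succ_pred_eq_of_pos hn
  have hId_le : Id ≤ lam ^ n * Real.exp (((n:ℝ) - 1) * Real.sqrt K * d) * Ir := by
    rw [hcov]
    calc lam * ∫ s in (0:ℝ)..r, f (lam * s)
        ≤ lam * ((lam * Real.exp (Real.sqrt K * d)) ^ (n - 1) * Ir) := by
          exact mul_le_mul_of_nonneg_left hint hlampos.le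
      _ = (lam * lam ^ (n-1)) * (Real.exp (Real.sqrt K * d) ^ (n-1)) * Ir := by
          rw [mul_pow]; ring
      _ = lam ^ n * Real.exp (((n:ℝ) - 1) * Real.sqrt K * d) * Ir := by
          rw [← pow_succ' lam, hnn, hexp]
  rw [div_le_iff₀ hIrpos]
  calc r ^ n * Id ≤ r ^ n * (lam ^ n * Real.exp (((n:ℝ) - 1) * Real.sqrt K * d) * Ir) := by
        apply mul_le_mul_of_nonneg_left hId_le (by positivity)
    _ = d ^ n * Real.exp (((n:ℝ) - 1) * Real.sqrt K * d) * Ir := by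
        rw [hlam, div_pow]
        field_simp
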